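/- Let H be a k-graph on n vertices with a set B ⊆ V(H) such that e(B) ≤ ε₀·C(|B|,k). Call an ℓ-set L ⊆ B atypical if deg(L,B) > ε₁·C(|B|, k−ℓ), where ε₁ = ε₀^{1/3}. Then the number of atypical ℓ-sets contained in B is at most 2·(ε₀/ε₁)·C(k,ℓ)·C(|B|−k+ℓ, ℓ), which in particular is at most ε₂·C(|B|,ℓ) where ε₂ = 2ε₁². -/

import Mathlib

open Finset

/-- Double counting: the sum over `l`-subsets `L` of `B` of `deg(L,B)` is at most
`e(B) * C(k,l)`. -/
theorem sum_deg_le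
    {V : Type*} [Fintype V] [DecidableEq V]
    (k l : ℕ)
    (E : Finset (Finset V)) (hEk : ∀ e ∈ E, e.card = k)
    (B : Finset V) :
    ∑ L ∈ B.powersetCard l,
        (((B \ L).powersetCard (k - l)).filter (fun T => L ∪ T ∈ E)).card
      ≤ (E.filter (fun e => e ⊆ B)).card * k.choose l := by
  classical
  have hcard : ∑ L ∈ B.powersetCard l,
      (((B \ L).powersetCard (k - l)).filter (fun T => L ∪ T ∈ E)).card
      = ((B.powersetCard l).sigma (fun L =>
          ((B \ L).powersetCard (k - l)).filter (fun T => L ∪ T ∈ E))).card := by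
    rw [Finset.card_sigma]
  have htarget : ((E.filter (fun e => e ⊆ B)).sigma (fun e => e.powersetCard l)).card
      = (E.filter (fun e => e ⊆ B)).card * k.choose l := by
    rw [Finset.card_sigma]
    rw [Finset.sum_congr rfl (fun e he => ?_), Finset.sum_const, smul_eq_mul]
    rw [Finset.card_powersetCard, hEk e (Finset.mem_filter.mp he).1]
  rw [hcard, ← htarget]
  apply Finset.card_le_card_of_injOn (fun p => ⟨p.1 ∪ p.2, p.1⟩)
  · intro ⟨L, T⟩ hp
    simp only [Finset.mem_coe, Finset.mem_sigma, Finset.mem_powersetCard, Finset.mem_filter] at hp ⊢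
    obtain ⟨⟨hLB, hLcard⟩, ⟨hTB, hTcard⟩, hE⟩ := hp
    have hTB' : T ⊆ B := hTB.trans (Finset.sdiff_subset)
    exact ⟨⟨hE, Finset.union_subset hLB hTB'⟩, Finset.subset_union_left, hLcard⟩
  · rintro ⟨L, T⟩ hp ⟨L', T'⟩ hp' heq
    simp only [Finset.mem_coe, Finset.mem_sigma, Finset.mem_powersetCard, Finset.mem_filter] at hp hp'
    injection heq with h1 h2
    have hL : L = L' := h2
    subst hL
    have hdisj : Disjoint L T := by
      exact Finset.disjoint_of_subset_right hp.2.1.1 (Finset.disjoint_sdiff)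
    have hdisj' : Disjoint L T' := by
      exact Finset.disjoint_of_subset_right hp'.2.1.1 (Finset.disjoint_sdiff)
    have hT : T = (L ∪ T) \ L := by
      rw [Finset.union_sdiff_left, Finset.sdiff_eq_self_of_disjoint hdisj.symm]
    have hT' : T' = (L ∪ T') \ L := by
      rw [Finset.union_sdiff_left, Finset.sdiff_eq_self_of_disjoint hdisj'.symm]
    have hTT : T = T' := by
      rw [hT, hT']
      exact congrArg (fun s => s \ L) h1
    subst hTT
    rfl

/-- If `e(B) ≤ ε₀·C(|B|,k)`, then the number of atypical `ℓ`-subsets `L` of `B`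
(those with `deg(L,B) > ε₁·C(|B|,k−ℓ)`, where `ε₁ = ε₀^{1/3}`) is at most
`2(ε₀/ε₁)·C(k,ℓ)·C(|B|−k+ℓ,ℓ)`, and in particular at most `ε₂·C(|B|,ℓ)` where
`ε₂ = 2ε₁²`. -/
theorem atypical_lsets_count
    {V : Type*} [Fintype V] [DecidableEq V]
    (k l : ℕ) (hl : 1 ≤ l) (hlk : l < k)
    (E : Finset (Finset V)) (hEk : ∀ e ∈ E, e.card = k)
    (B : Finset V) (hkB : k ≤ B.card)
    (ε₀ ε₁ ε₂ : ℝ) (hε₀ : 0 < ε₀) (hε₀1 : ε₀ < 1)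
    (hε₁ : ε₁ = ε₀ ^ ((1 : ℝ) / 3)) (hε₂ : ε₂ = 2 * ε₁ ^ 2)
    (heB : ((E.filter (fun e => e ⊆ B)).card : ℝ) ≤ ε₀ * (B.card.choose k : ℝ)) :
    (((B.powersetCard l).filter (fun L =>
        ε₁ * (B.card.choose (k - l) : ℝ) <
          ((((B \ L).powersetCard (k - l)).filter (fun T => L ∪ T ∈ E)).card : ℝ))).card
        : ℝ) ≤ 2 * (ε₀ / ε₁) * (k.choose l : ℝ) * ((B.card - k + l).choose l : ℝ) ∧
    (((B.powersetCard l).filter (fun L =>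
        ε₁ * (B.card.choose (k - l) : ℝ) <
          ((((B \ L).powersetCard (k - l)).filter (fun T => L ∪ T ∈ E)).card : ℝ))).card
        : ℝ) ≤ ε₂ * (B.card.choose l : ℝ) := by
  classical
  set n := B.card with hn
  set deg : Finset V → ℕ := fun L =>
    (((B \ L).powersetCard (k - l)).filter (fun T => L ∪ T ∈ E)).card with hdeg
  set A := (B.powersetCard l).filter (fun L =>
      ε₁ * (n.choose (k - l) : ℝ) < (deg L : ℝ)) with hA
  have hε₁pos : 0 < ε₁ := by
    rw [hε₁]; exact Real.rpow_pos_of_pos hε₀ _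
  have hCpos : 0 < (n.choose (k - l) : ℝ) := by
    exact_mod_cast Nat.choose_pos ((Nat.sub_le k l).trans hkB)
  -- key counting inequality
  have hsum : (∑ L ∈ B.powersetCard l, deg L : ℝ)
      ≤ ε₀ * (n.choose (k - l) : ℝ) * ((n - k + l).choose l : ℝ) := by
    have h1 : (∑ L ∈ B.powersetCard l, deg L : ℕ)
        ≤ (E.filter (fun e => e ⊆ B)).card * k.choose l := sum_deg_le k l E hEk B
    have h2 : (∑ L ∈ B.powersetCard l, deg L : ℝ)
        ≤ ((E.filter (fun e => e ⊆ B)).card : ℝ) * (k.choose l : ℝ) := by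
      exact_mod_cast h1
    have h3 : ((E.filter (fun e => e ⊆ B)).card : ℝ) * (k.choose l : ℝ)
        ≤ ε₀ * (n.choose k : ℝ) * (k.choose l : ℝ) := by
      apply mul_le_mul_of_nonneg_right heB (by positivity)
    have hid : (n.choose k : ℕ) * k.choose l
        = n.choose (k - l) * (n - k + l).choose l := by
      have := Nat.choose_mul (n := n) (Nat.sub_le k l)
      rw [Nat.choose_symm hlk.le] at this
      have e1 : n - (k - l) = n - k + l := by omega
      have e2 : k - (k - l) = l := by omega
      rw [this, e1, e2]
    calc (∑ L ∈ B.powersetCard l, deg L : ℝ) ≤ _ := h2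
      _ ≤ ε₀ * (n.choose k : ℝ) * (k.choose l : ℝ) := h3
      _ = ε₀ * ((n.choose k * k.choose l : ℕ) : ℝ) := by push_cast; ring
      _ = ε₀ * (n.choose (k - l) : ℝ) * ((n - k + l).choose l : ℝ) := by
          rw [hid]; push_cast; ring
  -- lower bound on sum by atypical sets
  have hlower : (A.card : ℝ) * (ε₁ * (n.choose (k - l) : ℝ))
      ≤ (∑ L ∈ B.powersetCard l, deg L : ℝ) := by
    have : (A.card : ℝ) * (ε₁ * (n.choose (k - l) : ℝ)) ≤ ∑ L ∈ A, (deg L : ℝ) := by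
      calc (A.card : ℝ) * (ε₁ * (n.choose (k - l) : ℝ))
          = ∑ _L ∈ A, ε₁ * (n.choose (k - l) : ℝ) := by
            rw [Finset.sum_const, nsmul_eq_mul]
        _ ≤ ∑ L ∈ A, (deg L : ℝ) :=
            Finset.sum_le_sum fun L hL => (Finset.mem_filter.mp hL).2.le
    refine this.trans ?_
    rw [show (∑ L ∈ B.powersetCard l, deg L : ℝ) = ∑ L ∈ B.powersetCard l, (deg L : ℝ) by
      push_cast; ring]
    apply Finset.sum_le_sum_of_subset_of_nonneg (Finset.filter_subset _ _)
    intro i _ _; positivity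
  -- main bound: |A| ≤ (ε₀/ε₁) * C(n-k+l, l)
  have hmain : (A.card : ℝ) ≤ (ε₀ / ε₁) * ((n - k + l).choose l : ℝ) := by
    have h := hlower.trans hsum
    have hrhs : ((ε₀ / ε₁) * ((n - k + l).choose l : ℝ)) * (ε₁ * (n.choose (k - l) : ℝ))
        = ε₀ * (n.choose (k - l) : ℝ) * ((n - k + l).choose l : ℝ) := by
      field_simp
    have hpos : 0 < ε₁ * (n.choose (k - l) : ℝ) := by positivity
    exact le_of_mul_le_mul_right (by rw [hrhs]; exact h) hpos
  have hdivpos : 0 < ε₀ / ε₁ := div_pos hε₀ hε₁pos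
  constructor
  · refine hmain.trans ?_
    have hk1 : (1 : ℝ) ≤ (k.choose l : ℝ) := by
      exact_mod_cast Nat.choose_pos hlk.le
    have hc : (0:ℝ) ≤ ((n - k + l).choose l : ℝ) := Nat.cast_nonneg _
    nlinarith [hdivpos.le]
  · have hrw : ε₀ / ε₁ = ε₁ ^ 2 := by
      rw [div_eq_iff hε₁pos.ne', hε₁, sq, ← Real.rpow_add hε₀, ← Real.rpow_add hε₀,
        show (1:ℝ)/3 + 1/3 + 1/3 = 1 by norm_num, Real.rpow_one]
    have hD : ((n - k + l).choose l : ℝ) ≤ (n.choose l : ℝ) := by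
      exact_mod_cast Nat.choose_le_choose l (by omega)
    rw [hε₂]
    calc (A.card : ℝ) ≤ (ε₀ / ε₁) * ((n - k + l).choose l : ℝ) := hmain
      _ = ε₁ ^ 2 * ((n - k + l).choose l : ℝ) := by rw [hrw]
      _ ≤ ε₁ ^ 2 * (n.choose l : ℝ) := by
          apply mul_le_mul_of_nonneg_left hD (by positivity)
      _ ≤ 2 * ε₁ ^ 2 * (n.choose l : ℝ) := by
          have hc : (0:ℝ) ≤ (n.choose l : ℝ) := Nat.cast_nonneg _
          nlinarith [sq_nonneg ε₁]
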